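/- arXiv:1212.3872 — 10 statements merged into one kernel-verified Lean document; each statement's English description precedes it below -/
import Mathlib

section
/- For every continuous Markov kernel (M, Σ, θ), every rational ε ≥ 0 and every CML formula φ, the extension ⟦φ⟧_ε = {m ∈ M : m ⊨_ε φ} is a measurable set, i.e., ⟦φ⟧_ε ∈ Σ. -/
open MeasureTheory Set
open scoped ENNReal NNReal

/-- Formulae of Continuous Markovian Logic (CML):
`φ ::= ⊤ | ¬φ | φ ∧ φ | L_r φ` with `r` a nonnegative rational. -/
inductive CML : Type
  | top : CML
  | neg : CML → CML
  | and : CML → CML → CML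
  | L : NNRat → CML → CML

namespace CML

/-- Derived falsity `⊥ = ¬⊤`. -/
def bot : CML := neg top

/-- Derived disjunction `φ ∨ ψ = ¬(¬φ ∧ ¬ψ)`. -/
def or (φ ψ : CML) : CML := neg (and (neg φ) (neg ψ))

/-- Derived implication `φ → ψ = ¬(φ ∧ ¬ψ)`. -/
def imp (φ ψ : CML) : CML := neg (and φ (neg ψ))

/-- The positive fragment `L⁺`, generated by `ψ ::= ⊤ | ψ∧ψ | ψ∨ψ | L_r ψ`. -/
inductive Pos : CML → Prop
  | top : Pos top
  | and {φ ψ : CML} : Pos φ → Pos ψ → Pos (and φ ψ)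
  | or {φ ψ : CML} : Pos φ → Pos ψ → Pos (or φ ψ)
  | L {φ : CML} (r : NNRat) : Pos φ → Pos (L r φ)

/-- The negative fragment `L⁻ = {¬φ : φ ∈ L⁺}`. -/
def NegF (φ : CML) : Prop := ∃ ψ : CML, Pos ψ ∧ φ = neg ψ

end CML

/-- The ε-satisfiability relation on a continuous Markov kernel with transition function `θ`:
`m ⊨_ε L_r φ` iff `θ(m)(⟦φ⟧_ε) + ε ≥ r`. -/
def sat {M : Type*} [MeasurableSpace M] (θ : M → Measure M) (ε : NNRat) :
    M → CML → Prop
  | _, CML.top => True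
  | m, CML.neg φ => ¬ sat θ ε m φ
  | m, CML.and φ ψ => sat θ ε m φ ∧ sat θ ε m ψ
  | m, CML.L r φ => ((r : ℝ≥0) : ℝ≥0∞) ≤ θ m {n | sat θ ε n φ} + ((ε : ℝ≥0) : ℝ≥0∞)

/-- A set `C` is `R`-closed iff `C^R ⊆ C`, where `C^R = {x | ∃ c ∈ C, (c,x) ∈ R}`. -/
def closR {M : Type*} (R : M → M → Prop) (C : Set M) : Set M := {x | ∃ c ∈ C, R c x}

def RClosed {M : Type*} (R : M → M → Prop) (C : Set M) : Prop := closR R C ⊆ C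

/-- `R` is a stochastic bisimulation: related states assign equal measure to every
measurable `R`-closed set. -/
def IsBisim {M : Type*} [MeasurableSpace M] (θ : M → Measure M) (R : M → M → Prop) : Prop :=
  ∀ m n : M, R m n → ∀ C : Set M, MeasurableSet C → RClosed R C → θ m C = θ n C

/-- Stochastic bisimilarity: being related by some stochastic bisimulation. -/
def Bisim {M : Type*} [MeasurableSpace M] (θ : M → Measure M) (m n : M) : Prop :=
  ∃ R : M → M → Prop, IsBisim θ R ∧ R m n
/-- The encoding `⟨·⟩_ε`, lowering all modal indices: `⟨L_r φ⟩_ε = L_{r ∸ ε} ⟨φ⟩_ε`. -/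
def lowE (ε : NNRat) : CML → CML
  | CML.top => CML.top
  | CML.neg φ => CML.neg (lowE ε φ)
  | CML.and φ ψ => CML.and (lowE ε φ) (lowE ε ψ)
  | CML.L r φ => CML.L (r - ε) (lowE ε φ)

/-- The encoding `⟨·⟩^ε`, raising all modal indices: `⟨L_r φ⟩^ε = L_{r+ε} ⟨φ⟩^ε`. -/
def upE (ε : NNRat) : CML → CML
  | CML.top => CML.top
  | CML.neg φ => CML.neg (upE ε φ)
  | CML.and φ ψ => CML.and (upE ε φ) (upE ε ψ)
  | CML.L r φ => CML.L (r + ε) (upE ε φ)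

/-- Every modal index `r` occurring in a subformula `L_r ψ` of `φ` satisfies `r ≥ ε`. -/
def IndGe (ε : NNRat) : CML → Prop
  | CML.top => True
  | CML.neg φ => IndGe ε φ
  | CML.and φ ψ => IndGe ε φ ∧ IndGe ε ψ
  | CML.L r φ => ε ≤ r ∧ IndGe ε φ

/-- Boolean evaluation of a formula, treating modal formulae `L_r φ` as atoms. -/
def evalB (v : CML → Bool) : CML → Bool
  | CML.top => true
  | CML.neg φ => !(evalB v φ)
  | CML.and φ ψ => evalB v φ && evalB v ψ
  | CML.L r φ => v (CML.L r φ)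

/-- Propositional tautologies (with modal subformulae regarded as atoms). -/
def Taut (φ : CML) : Prop := ∀ v : CML → Bool, evalB v φ = true

/-- The ε-provability relation `⊢_ε`: classical propositional logic together with
(A1)-(A4), (R1)-(R3). -/
inductive Prov (ε : NNRat) : CML → Prop
  | taut {φ : CML} : Taut φ → Prov ε φ
  | mp {φ ψ : CML} : Prov ε (φ.imp ψ) → Prov ε φ → Prov ε ψ
  | a1 (φ : CML) : Prov ε (CML.L ε φ)
  | a2 (r s : NNRat) (φ : CML) : Prov ε ((CML.L (r + s) φ).imp (CML.L r φ))
  | a3 (r s : NNRat) (φ ψ : CML) :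
      Prov ε (((CML.L r (φ.and ψ)).and (CML.L s (φ.and ψ.neg))).imp (CML.L (r + s - ε) φ))
  | a4 (r s : NNRat) (φ ψ : CML) :
      Prov ε ((((CML.L r (φ.and ψ)).neg).and ((CML.L s (φ.and ψ.neg)).neg)).imp
        ((CML.L (r + s - ε) φ).neg))
  | r1 {φ ψ : CML} (r : NNRat) : Prov ε (φ.imp ψ) → Prov ε ((CML.L r φ).imp (CML.L r ψ))
  | r2 {φ : CML} (s : NNRat) : (∀ r : NNRat, r < s → Prov ε (CML.L r φ)) →
      Prov ε (CML.L s φ)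
  | r3 {φ : CML} (s : NNRat) : (∀ r : NNRat, r > s → Prov ε (CML.L r φ)) →
      Prov ε CML.bot

/-- ε-validity: `φ` holds at every state of every continuous Markov kernel, i.e. of every
analytic Borel space with a measurable transition function assigning finite measures. -/
def Valid (ε : NNRat) (φ : CML) : Prop :=
  ∀ (M : Type) [TopologicalSpace M] [MeasurableSpace M] [BorelSpace M],
    AnalyticSet (univ : Set M) →
      ∀ θ : M → Measure M, Measurable θ → (∀ m : M, θ m univ ≠ ∞) →
        ∀ m : M, sat θ ε m φ

/-- `R` is closed under stochastic bisimilarity. -/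
def ClosedUnderBisim {M : Type*} [MeasurableSpace M] (θ : M → Measure M)
    (R : M → M → Prop) : Prop :=
  ∀ m n m' n' : M, R m n → Bisim θ m m' → Bisim θ n n' → R m' n'

/-- `R` is an ε-behavioral order: it is closed under bisimilarity and whenever `m R n`,
`θ(n)(C) − θ(m)(C^R) ≤ ε` for every `C` in the bisimulation generator
`G_M = {⟦φ⟧_0 : φ ∈ L⁺}`. -/
def IsEpsOrder {M : Type*} [MeasurableSpace M] (θ : M → Measure M) (ε : NNRat)
    (R : M → M → Prop) : Prop :=
  ClosedUnderBisim θ R ∧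
    ∀ m n : M, R m n → ∀ φ : CML, CML.Pos φ →
      θ n {x | sat θ 0 x φ} ≤ θ m (closR R {x | sat θ 0 x φ}) + ((ε : ℝ≥0) : ℝ≥0∞)

/-- `m ≺_ε n`: the largest ε-behavioral order. -/
def prec {M : Type*} [MeasurableSpace M] (θ : M → Measure M) (ε : NNRat) (m n : M) : Prop :=
  ∃ R : M → M → Prop, IsEpsOrder θ ε R ∧ R m n

/-- `R` is an essential ε-behavioral order: it is closed under bisimilarity and whenever
`m R n`, `θ(n)(C) − θ(m)(C^R) ∈ [0, ε]` for every `C` in the extended bisimulation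
generator `\overline{G_M} = {⟦φ⟧_0 : φ ∈ L}`. -/
def IsEssEpsOrder {M : Type*} [MeasurableSpace M] (θ : M → Measure M) (ε : NNRat)
    (R : M → M → Prop) : Prop :=
  ClosedUnderBisim θ R ∧
    ∀ m n : M, R m n → ∀ φ : CML,
      θ m (closR R {x | sat θ 0 x φ}) ≤ θ n {x | sat θ 0 x φ} ∧
      θ n {x | sat θ 0 x φ} ≤ θ m (closR R {x | sat θ 0 x φ}) + ((ε : ℝ≥0) : ℝ≥0∞)

/-- `m ≺⁺_ε n`: the largest essential ε-behavioral order. -/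
def precP {M : Type*} [MeasurableSpace M] (θ : M → Measure M) (ε : NNRat) (m n : M) : Prop :=
  ∃ R : M → M → Prop, IsEssEpsOrder θ ε R ∧ R m n

/-- The encoding `|·|_ε` on formulae in disjunctive normal form (with `L_r φ` treated as
atoms): `DNFEnc ε φ φ'` means `φ` is in disjunctive normal form and `φ' = |φ|_ε`. -/
inductive DNFEnc (ε : NNRat) : CML → CML → Prop
  | top : DNFEnc ε CML.top CML.top
  | bot : DNFEnc ε CML.bot CML.bot
  | L {ψ ψ' : CML} (r : NNRat) : DNFEnc ε ψ ψ' → DNFEnc ε (CML.L r ψ) (CML.L r ψ')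
  | negL {ψ ψ' : CML} (r : NNRat) :
      DNFEnc ε ψ ψ' → DNFEnc ε ((CML.L r ψ).neg) ((CML.L (r + ε) ψ').neg)
  | and {φ φ' χ χ' : CML} :
      DNFEnc ε φ φ' → DNFEnc ε χ χ' → DNFEnc ε (φ.and χ) (φ'.and χ')
  | or {φ φ' χ χ' : CML} :
      DNFEnc ε φ φ' → DNFEnc ε χ χ' → DNFEnc ε (CML.or φ χ) (CML.or φ' χ')

/-- The behavioural distance `d(m,n) = inf {ε | m ≺_ε n and n ≺_ε m}`. -/
noncomputable def bdist {M : Type*} [MeasurableSpace M] (θ : M → Measure M)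
    (m n : M) : ℝ≥0 :=
  sInf {x : ℝ≥0 | ∃ ε : NNRat, x = (ε : ℝ≥0) ∧ prec θ ε m n ∧ prec θ ε n m}

/-- for every CMK, rational ε ≥ 0 and CML formula φ,
the extension ⟦φ⟧_ε is measurable. -/
theorem extension_measurable {M : Type*} [TopologicalSpace M] [MeasurableSpace M] [BorelSpace M]
    (hA : AnalyticSet (univ : Set M))
    (θ : M → Measure M) (hθ : Measurable θ) (hfin : ∀ m : M, θ m univ ≠ ∞)
    (ε : NNRat) (φ : CML) :
    MeasurableSet {m : M | sat θ ε m φ} := by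
  induction φ with
  | top => exact MeasurableSet.univ
  | neg φ ih => exact ih.compl
  | and φ ψ ihφ ihψ =>
      simpa [sat, Set.setOf_and] using ihφ.inter ihψ
  | L r φ ih =>
      have hmeas : Measurable fun m => θ m {n | sat θ ε n φ} + ((ε : ℝ≥0) : ℝ≥0∞) :=
        ((Measure.measurable_coe ih).comp hθ).add_const _
      exact hmeas measurableSet_Ici
end

section
/- For every state m of a continuous Markov kernel, every formula φ in the positive fragment L⁺, and arbitrary rationals ε, ε' ≥ 0: if m ⊨_ε φ then m ⊨_{ε+ε'} φ. In particular, m ⊨_0 φ implies m ⊨_ε φ for every rational ε ≥ 0. -/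
open MeasureTheory Set
open scoped ENNReal NNReal

theorem sat_pos_mono_aux {M : Type*} [MeasurableSpace M]
    (θ : M → Measure M) {φ : CML} (hφ : CML.Pos φ) (ε ε' : NNRat) :
    ∀ m : M, sat θ ε m φ → sat θ (ε + ε') m φ := by
  induction hφ with
  | top => intro m _; trivial
  | and hφ hψ ihφ ihψ =>
      intro m h
      exact ⟨ihφ m h.1, ihψ m h.2⟩
  | or hφ hψ ihφ ihψ =>
      intro m h
      simp only [CML.or, sat, not_and_or, not_not] at h ⊢
      rcases h with h | h
      · exact Or.inl (ihφ m h)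
      · exact Or.inr (ihψ m h)
  | @L ψ r hφ ih =>
      intro m h
      simp only [sat] at h ⊢
      calc ((r : ℝ≥0) : ℝ≥0∞) ≤ θ m {n | sat θ ε n ψ} + ((ε : ℝ≥0) : ℝ≥0∞) := h
        _ ≤ θ m {n | sat θ (ε + ε') n ψ} + (((ε + ε' : NNRat) : ℝ≥0) : ℝ≥0∞) := by
            refine add_le_add (measure_mono fun n hn => ih n hn) ?_
            exact_mod_cast (le_self_add : (ε:ℝ≥0) ≤ ε + ε')

/-- for φ ∈ L⁺, ε-satisfaction is monotone in ε. -/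
theorem sat_pos_mono {M : Type*} [TopologicalSpace M] [MeasurableSpace M] [BorelSpace M]
    (hA : AnalyticSet (univ : Set M))
    (θ : M → Measure M) (hθ : Measurable θ) (hfin : ∀ m : M, θ m univ ≠ ∞)
    (φ : CML) (hφ : CML.Pos φ) (ε ε' : NNRat) (m : M) :
    (sat θ ε m φ → sat θ (ε + ε') m φ) ∧ (sat θ 0 m φ → sat θ ε m φ) := by
  constructor
  · exact sat_pos_mono_aux θ hφ ε ε' m
  · intro h
    have := sat_pos_mono_aux θ hφ 0 ε m h
    simpa using this
end

section
/- For every state m of a continuous Markov kernel, every formula φ in the negative fragment L⁻, and arbitrary rationals ε, ε' ≥ 0: if m ⊨_{ε+ε'} φ then m ⊨_ε φ. Equivalently, for φ ∈ L⁻ the sets ⟦φ⟧_ε are decreasing in ε. -/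
open MeasureTheory Set
open scoped ENNReal NNReal

lemma sat_pos_mono_s2 {M : Type*} [MeasurableSpace M] (θ : M → Measure M)
    {φ : CML} (hφ : CML.Pos φ) :
    ∀ ε₁ ε₂ : NNRat, ε₁ ≤ ε₂ → ∀ m : M, sat θ ε₁ m φ → sat θ ε₂ m φ := by
  induction hφ with
  | top => intro _ _ _ _ _; trivial
  | and hφ hψ ihφ ihψ =>
      intro ε₁ ε₂ h m hm
      exact ⟨ihφ ε₁ ε₂ h m hm.1, ihψ ε₁ ε₂ h m hm.2⟩
  | or hφ hψ ihφ ihψ =>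
      intro ε₁ ε₂ h m hm
      simp only [CML.or, sat, not_and_or, not_not] at hm ⊢
      rcases hm with hm | hm
      · exact Or.inl (ihφ ε₁ ε₂ h m hm)
      · exact Or.inr (ihψ ε₁ ε₂ h m hm)
  | L r hφ ih =>
      intro ε₁ ε₂ h m hm
      simp only [sat] at hm ⊢
      refine hm.trans ?_
      gcongr
      · exact fun hx => ih ε₁ ε₂ h _ hx

/-- for φ ∈ L⁻, ε-satisfaction is antitone in ε;
equivalently the extensions ⟦φ⟧_ε are decreasing in ε. -/
theorem sat_neg_anti {M : Type*} [TopologicalSpace M] [MeasurableSpace M] [BorelSpace M]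
    (hA : AnalyticSet (univ : Set M))
    (θ : M → Measure M) (hθ : Measurable θ) (hfin : ∀ m : M, θ m univ ≠ ∞)
    (φ : CML) (hφ : CML.NegF φ) (ε ε' : NNRat) (m : M) :
    (sat θ (ε + ε') m φ → sat θ ε m φ) ∧
    (∀ ε₁ ε₂ : NNRat, ε₁ ≤ ε₂ → {x : M | sat θ ε₂ x φ} ⊆ {x : M | sat θ ε₁ x φ}) := by
  obtain ⟨ψ, hψ, rfl⟩ := hφ
  constructor
  · intro h hc
    exact h (sat_pos_mono_s2 θ hψ ε (ε + ε') (le_self_add) m hc)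
  · intro ε₁ ε₂ h x hx hc
    exact hx (sat_pos_mono_s2 θ hψ ε₁ ε₂ h x hc)
end

section
/- For every rational ε > 0 there exist a continuous Markov process (M, m) and a formula φ ∈ L⁻ such that m ⊨_0 φ but m ⊭_ε φ. Concretely, taking the one-state CMK with θ(m)({m}) = r, one has m ⊨_0 ¬L_{r+δ}⊤ for every rational δ > 0, while it is not the case that m ⊨_ε ¬L_{r+δ}⊤ for every rational δ > 0 when ε > 0. -/
open MeasureTheory Set
open scoped ENNReal NNReal

/-- for every rational ε > 0 there is a CMP and a formula φ ∈ L⁻ with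
m ⊨_0 φ but m ⊭_ε φ; concretely, the one-state CMK with θ(m)({m}) = r satisfies
m ⊨_0 ¬L_{r+δ}⊤ for every δ > 0 but not m ⊨_ε ¬L_{r+δ}⊤ for every δ > 0. -/
theorem neg_sat_not_mono (ε : NNRat) (hε : 0 < ε) (r : NNRat) :
    (∀ δ : NNRat, 0 < δ →
      sat (fun _ : Unit => ((r : ℝ≥0) : ℝ≥0∞) • Measure.dirac ()) 0 ()
        ((CML.L (r + δ) CML.top).neg)) ∧
    ¬ (∀ δ : NNRat, 0 < δ →
      sat (fun _ : Unit => ((r : ℝ≥0) : ℝ≥0∞) • Measure.dirac ()) ε ()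
        ((CML.L (r + δ) CML.top).neg)) ∧
    ∃ φ : CML, CML.NegF φ ∧
      sat (fun _ : Unit => ((r : ℝ≥0) : ℝ≥0∞) • Measure.dirac ()) 0 () φ ∧
      ¬ sat (fun _ : Unit => ((r : ℝ≥0) : ℝ≥0∞) • Measure.dirac ()) ε () φ := by
  have hset : ∀ ε : NNRat, {n : Unit | sat (fun _ : Unit => ((r : ℝ≥0) : ℝ≥0∞) • Measure.dirac ()) ε n CML.top} = Set.univ := by
    intro ε; ext ⟨⟩; simp [sat]
  have hmeas : (((r : ℝ≥0) : ℝ≥0∞) • Measure.dirac ()) (Set.univ : Set Unit) = ((r : ℝ≥0) : ℝ≥0∞) := by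
    simp
  have key : ∀ ε δ : NNRat,
      sat (fun _ : Unit => ((r : ℝ≥0) : ℝ≥0∞) • Measure.dirac ()) ε ()
        ((CML.L (r + δ) CML.top).neg) ↔ ¬ (((r + δ : NNRat) : ℝ≥0) : ℝ≥0∞) ≤ ((r : ℝ≥0) : ℝ≥0∞) + ((ε : ℝ≥0) : ℝ≥0∞) := by
    intro ε δ
    simp only [sat, Set.setOf_true, hmeas]
  have hcast : ∀ a b : NNRat, (((a + b : NNRat) : ℝ≥0) : ℝ≥0∞) = ((a : ℝ≥0) : ℝ≥0∞) + ((b : ℝ≥0) : ℝ≥0∞) := by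
    intro a b; push_cast; ring
  have hzero : ∀ δ : NNRat, 0 < δ →
      sat (fun _ : Unit => ((r : ℝ≥0) : ℝ≥0∞) • Measure.dirac ()) 0 ()
        ((CML.L (r + δ) CML.top).neg) := by
    intro δ hδ
    rw [key 0 δ, hcast]
    simp only [NNRat.cast_zero, ENNReal.coe_zero, add_zero]
    intro h
    have hne : ((δ : ℝ≥0) : ℝ≥0∞) ≠ 0 := by
      simp only [ne_eq, ENNReal.coe_eq_zero]
      exact_mod_cast hδ.ne'
    exact absurd h (not_le.mpr (ENNReal.lt_add_right (by simp) hne))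
  have heps : ¬ sat (fun _ : Unit => ((r : ℝ≥0) : ℝ≥0∞) • Measure.dirac ()) ε ()
      ((CML.L (r + ε) CML.top).neg) := by
    rw [key ε ε]
    exact not_not.mpr (le_of_eq (hcast r ε))
  refine ⟨hzero, fun h => heps (h ε hε), ?_⟩
  exact ⟨(CML.L (r + ε) CML.top).neg, ⟨CML.L (r + ε) CML.top, CML.Pos.L _ CML.Pos.top, rfl⟩,
    hzero ε hε, heps⟩
end

section
/- For every state m of a continuous Markov kernel, every CML formula φ ∈ L, and arbitrary rationals ε, ε' ≥ 0: m ⊨_{ε+ε'} φ if and only if m ⊨_ε ⟨φ⟩_{ε'}. -/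
open MeasureTheory Set
open scoped ENNReal NNReal

lemma lowE_key (r ε ε' : NNRat) (a : ℝ≥0∞) :
    ((r : ℝ≥0) : ℝ≥0∞) ≤ a + (((ε + ε' : NNRat) : ℝ≥0) : ℝ≥0∞) ↔
    (((r - ε' : NNRat) : ℝ≥0) : ℝ≥0∞) ≤ a + ((ε : ℝ≥0) : ℝ≥0∞) := by
  have h3 : (((ε + ε' : NNRat) : ℝ≥0) : ℝ≥0∞) = ((ε : ℝ≥0) : ℝ≥0∞) + ((ε' : ℝ≥0) : ℝ≥0∞) := by
    rw [← ENNReal.coe_add]; norm_cast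
  rcases le_total r ε' with h | h
  · have h1 : r - ε' = 0 := tsub_eq_zero_of_le h
    have h2 : ((r : ℝ≥0) : ℝ≥0∞) ≤ ((ε' : ℝ≥0) : ℝ≥0∞) := by
      refine ENNReal.coe_le_coe.2 ?_
      exact_mod_cast h
    simp only [h1, NNRat.cast_zero, ENNReal.coe_zero, zero_le, iff_true, h3]
    exact h2.trans (le_add_left (le_add_left le_rfl))
  · have h1 : ((r : ℝ≥0) : ℝ≥0∞) = (((r - ε' : NNRat) : ℝ≥0) : ℝ≥0∞) + ((ε' : ℝ≥0) : ℝ≥0∞) := by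
      rw [← ENNReal.coe_add]
      have h4 : (r - ε') + ε' = r := tsub_add_cancel_of_le h
      norm_cast
      exact h4.symm
    rw [h1, h3, ← add_assoc]
    exact ENNReal.add_le_add_iff_right (by simp)

lemma sat_lowE_aux {M : Type*} [MeasurableSpace M]
    (θ : M → Measure M) (φ : CML) (ε ε' : NNRat) :
    ∀ m : M, sat θ (ε + ε') m φ ↔ sat θ ε m (lowE ε' φ) := by
  induction φ with
  | top => intro m; simp [sat, lowE]
  | neg φ ih => intro m; simpa [sat, lowE] using not_congr (ih m)
  | and φ ψ ihφ ihψ => intro m; simpa [sat, lowE] using and_congr (ihφ m) (ihψ m)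
  | L r φ ih =>
    intro m
    have hset : {n | sat θ (ε + ε') n φ} = {n | sat θ ε n (lowE ε' φ)} := by
      ext n; exact ih n
    show ((r : ℝ≥0) : ℝ≥0∞) ≤ _ + _ ↔ _
    rw [lowE, hset]
    exact lowE_key r ε ε' _

/-- m ⊨_{ε+ε'} φ iff m ⊨_ε ⟨φ⟩_{ε'}. -/
theorem sat_lowE {M : Type*} [TopologicalSpace M] [MeasurableSpace M] [BorelSpace M]
    (hA : AnalyticSet (univ : Set M))
    (θ : M → Measure M) (hθ : Measurable θ) (hfin : ∀ m : M, θ m univ ≠ ∞)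
    (φ : CML) (ε ε' : NNRat) (m : M) :
    sat θ (ε + ε') m φ ↔ sat θ ε m (lowE ε' φ) := by
  exact sat_lowE_aux θ φ ε ε' m
end

section
/- For every state m of a continuous Markov kernel, every CML formula φ ∈ L, and arbitrary rationals ε, ε' ≥ 0: m ⊨_ε φ if and only if m ⊨_{ε+ε'} ⟨φ⟩^{ε'}. -/
open MeasureTheory Set
open scoped ENNReal NNReal

/-- m ⊨_ε φ iff m ⊨_{ε+ε'} ⟨φ⟩^{ε'}. -/
theorem sat_upE {M : Type*} [TopologicalSpace M] [MeasurableSpace M] [BorelSpace M]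
    (hA : AnalyticSet (univ : Set M))
    (θ : M → Measure M) (hθ : Measurable θ) (hfin : ∀ m : M, θ m univ ≠ ∞)
    (φ : CML) (ε ε' : NNRat) (m : M) :
    sat θ ε m φ ↔ sat θ (ε + ε') m (upE ε' φ) := by
  induction φ generalizing m with
  | top => simp [sat, upE]
  | neg φ ih => simp [sat, upE, ih]
  | and φ ψ ihφ ihψ => simp [sat, upE, ihφ, ihψ]
  | L r φ ih =>
    have hset : {n | sat θ ε n φ} = {n | sat θ (ε + ε') n (upE ε' φ)} := by
      ext n; exact ih n
    simp only [sat, upE, hset]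
    push_cast
    rw [← add_assoc]
    exact (ENNReal.add_le_add_iff_right ENNReal.coe_ne_top).symm
end

section
/- For every state m of a continuous Markov kernel, every CML formula φ ∈ L, and every rational ε ≥ 0: (1) m ⊨_ε φ if and only if m ⊨_0 ⟨φ⟩_ε, and (2) m ⊨_0 φ if and only if m ⊨_ε ⟨φ⟩^ε. -/
open MeasureTheory Set
open scoped ENNReal NNReal

/-- m ⊨_ε φ iff m ⊨_0 ⟨φ⟩_ε, and m ⊨_0 φ iff m ⊨_ε ⟨φ⟩^ε. -/
theorem sat_classic_vs_eps {M : Type*} [TopologicalSpace M] [MeasurableSpace M] [BorelSpace M]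
    (hA : AnalyticSet (univ : Set M))
    (θ : M → Measure M) (hθ : Measurable θ) (hfin : ∀ m : M, θ m univ ≠ ∞)
    (φ : CML) (ε : NNRat) (m : M) :
    (sat θ ε m φ ↔ sat θ 0 m (lowE ε φ)) ∧
    (sat θ 0 m φ ↔ sat θ ε m (upE ε φ)) := by
  induction φ generalizing m with
  | top => simp [sat, lowE, upE]
  | neg ψ ih => simp only [sat, lowE, upE]; exact ⟨not_congr (ih m).1, not_congr (ih m).2⟩
  | and ψ χ ih1 ih2 =>
    simp only [sat, lowE, upE]
    exact ⟨and_congr (ih1 m).1 (ih2 m).1, and_congr (ih1 m).2 (ih2 m).2⟩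
  | L r ψ ih =>
    have hset1 : {n | sat θ ε n ψ} = {n | sat θ 0 n (lowE ε ψ)} := by
      ext n; exact (ih n).1
    have hset2 : {n | sat θ 0 n ψ} = {n | sat θ ε n (upE ε ψ)} := by
      ext n; exact (ih n).2
    constructor
    · simp only [sat, lowE, ← hset1]
      have hcast : ((r - ε : NNRat) : ℝ≥0) = (r : ℝ≥0) - (ε : ℝ≥0) := by
        rcases le_total ε r with h | h
        · have : (r - ε) + ε = r := tsub_add_cancel_of_le h
          have h2 : ((r - ε : NNRat) : ℝ≥0) + (ε : ℝ≥0) = (r : ℝ≥0) := by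
            exact_mod_cast congrArg (fun x : NNRat => (x : ℝ≥0)) this
          rw [← h2, add_tsub_cancel_right]
        · have h1 : r - ε = 0 := tsub_eq_zero_of_le h
          have h2 : (r : ℝ≥0) - (ε : ℝ≥0) = 0 := tsub_eq_zero_of_le (by exact_mod_cast h)
          rw [h1, h2]; simp
      rw [hcast, ENNReal.coe_sub]
      simp only [NNRat.cast_zero, ENNReal.coe_zero, add_zero, tsub_le_iff_right]
    · simp only [sat, upE, ← hset2]
      simp only [NNRat.cast_zero, ENNReal.coe_zero, add_zero, NNRat.cast_add, ENNReal.coe_add]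
      rw [ENNReal.add_le_add_iff_right (by simp)]
end

section
/- For every CML formula φ ∈ L and rationals ε, ε' ≥ 0: (1) ⊢_{ε+ε'} φ if and only if ⊢_ε ⟨φ⟩_{ε'}; in particular ⊢_ε φ iff ⊢_0 ⟨φ⟩_ε; (2) ⊢_ε φ if and only if ⊢_{ε+ε'} ⟨φ⟩^{ε'}; in particular ⊢_0 φ iff ⊢_ε ⟨φ⟩^ε; (3) if φ ∈ L⁺ then ⊢_{ε'} φ implies ⊢_{ε+ε'} φ. -/
open MeasureTheory Set
open scoped ENNReal NNReal

section ProvTransferAux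

open CML

/-! ### Basic facts about the encodings -/

@[simp] lemma lowE_top (ε : NNRat) : lowE ε CML.top = CML.top := rfl
@[simp] lemma lowE_neg (ε : NNRat) (φ : CML) : lowE ε φ.neg = (lowE ε φ).neg := rfl
@[simp] lemma lowE_and (ε : NNRat) (φ ψ : CML) :
    lowE ε (φ.and ψ) = (lowE ε φ).and (lowE ε ψ) := rfl
@[simp] lemma lowE_L (ε r : NNRat) (φ : CML) :
    lowE ε (CML.L r φ) = CML.L (r - ε) (lowE ε φ) := rfl
@[simp] lemma lowE_imp (ε : NNRat) (φ ψ : CML) :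
    lowE ε (φ.imp ψ) = (lowE ε φ).imp (lowE ε ψ) := rfl
@[simp] lemma lowE_bot (ε : NNRat) : lowE ε CML.bot = CML.bot := rfl

@[simp] lemma upE_top (ε : NNRat) : upE ε CML.top = CML.top := rfl
@[simp] lemma upE_neg (ε : NNRat) (φ : CML) : upE ε φ.neg = (upE ε φ).neg := rfl
@[simp] lemma upE_and (ε : NNRat) (φ ψ : CML) :
    upE ε (φ.and ψ) = (upE ε φ).and (upE ε ψ) := rfl
@[simp] lemma upE_L (ε r : NNRat) (φ : CML) :
    upE ε (CML.L r φ) = CML.L (r + ε) (upE ε φ) := rfl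
@[simp] lemma upE_imp (ε : NNRat) (φ ψ : CML) :
    upE ε (φ.imp ψ) = (upE ε φ).imp (upE ε ψ) := rfl
@[simp] lemma upE_bot (ε : NNRat) : upE ε CML.bot = CML.bot := rfl
@[simp] lemma upE_or (ε : NNRat) (φ ψ : CML) :
    upE ε (CML.or φ ψ) = CML.or (upE ε φ) (upE ε ψ) := rfl

lemma lowE_upE (ε : NNRat) (φ : CML) : lowE ε (upE ε φ) = φ := by
  induction φ with
  | top => rfl
  | neg φ ih => simp [ih]
  | and φ ψ ih1 ih2 => simp [ih1, ih2]
  | L r φ ih => simp [ih, add_tsub_cancel_right]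

/-! ### Tautologies are preserved by atom substitutions -/

lemma evalB_lowE (ε : NNRat) (v : CML → Bool) (φ : CML) :
    evalB v (lowE ε φ) = evalB (fun χ => evalB v (lowE ε χ)) φ := by
  induction φ with
  | top => rfl
  | neg φ ih => simp [evalB, ih]
  | and φ ψ ih1 ih2 => simp [evalB, ih1, ih2]
  | L r φ ih => rfl

lemma evalB_upE (ε : NNRat) (v : CML → Bool) (φ : CML) :
    evalB v (upE ε φ) = evalB (fun χ => evalB v (upE ε χ)) φ := by
  induction φ with
  | top => rfl
  | neg φ ih => simp [evalB, ih]
  | and φ ψ ih1 ih2 => simp [evalB, ih1, ih2]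
  | L r φ ih => rfl

lemma Taut.lowE {φ : CML} (h : Taut φ) (ε : NNRat) : Taut (lowE ε φ) := by
  intro v; rw [evalB_lowE]; exact h _

lemma Taut.upE {φ : CML} (h : Taut φ) (ε : NNRat) : Taut (upE ε φ) := by
  intro v; rw [evalB_upE]; exact h _

/-! ### Propositional combinators -/

lemma prov_imp_trans {ε : NNRat} {A B C : CML}
    (h1 : Prov ε (A.imp B)) (h2 : Prov ε (B.imp C)) : Prov ε (A.imp C) := by
  have t : Taut ((A.imp B).imp ((B.imp C).imp (A.imp C))) := by
    intro v
    simp only [CML.imp, evalB]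
    revert h1 h2
    generalize evalB v A = a; generalize evalB v B = b; generalize evalB v C = c
    intros; revert a b c; decide
  exact Prov.mp (Prov.mp (Prov.taut t) h1) h2

lemma prov_imp_of_prov {ε : NNRat} {B : CML} (A : CML) (h : Prov ε B) :
    Prov ε (A.imp B) := by
  have t : Taut (B.imp (A.imp B)) := by
    intro v
    simp only [CML.imp, evalB]
    generalize evalB v A = a; generalize evalB v B = b
    revert a b; decide
  exact Prov.mp (Prov.taut t) h

lemma prov_imp_of_neg_left {ε : NNRat} {C : CML} (D E : CML) (h : Prov ε C) :
    Prov ε (((C.neg).and D).imp E) := by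
  have t : Taut (C.imp (((C.neg).and D).imp E)) := by
    intro v
    simp only [CML.imp, evalB]
    generalize evalB v C = c; generalize evalB v D = d; generalize evalB v E = e
    revert c d e; decide
  exact Prov.mp (Prov.taut t) h

lemma prov_imp_of_neg_right {ε : NNRat} {C : CML} (D E : CML) (h : Prov ε C) :
    Prov ε ((D.and (C.neg)).imp E) := by
  have t : Taut (C.imp ((D.and (C.neg)).imp E)) := by
    intro v
    simp only [CML.imp, evalB]
    generalize evalB v C = c; generalize evalB v D = d; generalize evalB v E = e
    revert c d e; decide
  exact Prov.mp (Prov.taut t) h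

lemma prov_contrapose {ε : NNRat} {A B : CML} (h : Prov ε (A.imp B)) :
    Prov ε ((B.neg).imp (A.neg)) := by
  have t : Taut ((A.imp B).imp ((B.neg).imp (A.neg))) := by
    intro v
    simp only [CML.imp, evalB]
    generalize evalB v A = a; generalize evalB v B = b
    revert a b; decide
  exact Prov.mp (Prov.taut t) h

lemma prov_and_cong {ε : NNRat} {A A' B B' : CML}
    (h1 : Prov ε (A.imp A')) (h2 : Prov ε (B.imp B')) :
    Prov ε ((A.and B).imp (A'.and B')) := by
  have t : Taut ((A.imp A').imp ((B.imp B').imp ((A.and B).imp (A'.and B')))) := by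
    intro v
    simp only [CML.imp, evalB]
    generalize evalB v A = a; generalize evalB v A' = a'
    generalize evalB v B = b; generalize evalB v B' = b'
    revert a a' b b'; decide
  exact Prov.mp (Prov.mp (Prov.taut t) h1) h2

lemma prov_or_cong {ε : NNRat} {A A' B B' : CML}
    (h1 : Prov ε (A.imp A')) (h2 : Prov ε (B.imp B')) :
    Prov ε ((A.or B).imp (A'.or B')) := by
  have t : Taut ((A.imp A').imp ((B.imp B').imp ((A.or B).imp (A'.or B')))) := by
    intro v
    simp only [CML.imp, CML.or, evalB]
    generalize evalB v A = a; generalize evalB v A' = a'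
    generalize evalB v B = b; generalize evalB v B' = b'
    revert a a' b b'; decide
  exact Prov.mp (Prov.mp (Prov.taut t) h1) h2

lemma prov_imp_refl (ε : NNRat) (A : CML) : Prov ε (A.imp A) := by
  apply Prov.taut
  intro v
  simp only [CML.imp, evalB]
  generalize evalB v A = a; revert a; decide

/-! ### Modal helper lemmas -/

/-- `L_t φ` is provable whenever `t ≤ ε`. -/
lemma prov_L_of_le {ε t : NNRat} (h : t ≤ ε) (φ : CML) : Prov ε (CML.L t φ) := by
  have := Prov.a2 (ε := ε) t (ε - t) φ
  rw [add_tsub_cancel_of_le h] at this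
  exact Prov.mp this (Prov.a1 φ)

/-- Monotone weakening of modal indices. -/
lemma prov_L_mono (ε : NNRat) {t u : NNRat} (h : t ≤ u) (φ : CML) :
    Prov ε ((CML.L u φ).imp (CML.L t φ)) := by
  have := Prov.a2 (ε := ε) t (u - t) φ
  rwa [add_tsub_cancel_of_le h] at this

lemma sub_add_sub_le (a b c d : NNRat) : a + b - (c + d) ≤ (a - c) + (b - d) := by
  rw [tsub_le_iff_right]
  calc a + b ≤ (a - c + c) + (b - d + d) := add_le_add le_tsub_add le_tsub_add
    _ = a - c + (b - d) + (c + d) := by ring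

/-! ### Transfer lemma A: lowering -/

lemma prov_lowE {ε ε' : NNRat} {φ : CML} (h : Prov (ε + ε') φ) :
    Prov ε (lowE ε' φ) := by
  induction h with
  | taut h => exact Prov.taut (h.lowE ε')
  | mp h1 h2 ih1 ih2 => exact Prov.mp ih1 ih2
  | a1 φ =>
      rw [lowE_L, add_tsub_cancel_right]
      exact Prov.a1 _
  | a2 r s φ =>
      simp only [lowE_imp, lowE_L]
      exact prov_L_mono ε (tsub_le_tsub_right (le_add_right le_rfl) ε') _
  | a3 r s φ ψ =>
      simp only [lowE_imp, lowE_and, lowE_L, lowE_neg]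
      refine prov_imp_trans (Prov.a3 (r - ε') (s - ε') (lowE ε' φ) (lowE ε' ψ)) ?_
      apply prov_L_mono
      calc r + s - (ε + ε') - ε' = r + s - (ε' + ε') - ε := by
            rw [tsub_tsub, tsub_tsub]; ring_nf
        _ ≤ (r - ε') + (s - ε') - ε :=
            tsub_le_tsub_right (sub_add_sub_le r s ε' ε') ε
  | a4 r s φ ψ =>
      simp only [lowE_imp, lowE_and, lowE_L, lowE_neg]
      rcases le_or_gt r ε' with hr | hr
      · exact prov_imp_of_neg_left _ _
          (by rw [tsub_eq_zero_of_le hr]; exact prov_L_of_le (zero_le (a := ε)) _)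
      rcases le_or_gt s ε' with hs | hs
      · exact prov_imp_of_neg_right _ _
          (by rw [tsub_eq_zero_of_le hs]; exact prov_L_of_le (zero_le (a := ε)) _)
      have hr' : ε' ≤ r := hr.le
      have hs' : ε' ≤ s := hs.le
      have hidx : r + s - (ε + ε') - ε' = (r - ε') + (s - ε') - ε := by
        rw [tsub_add_tsub_comm hr' hs', tsub_tsub, tsub_tsub]; ring_nf
      rw [hidx]
      exact Prov.a4 (r - ε') (s - ε') (lowE ε' φ) (lowE ε' ψ)
  | r1 r h ih =>
      rw [lowE_imp] at ih
      simpa only [lowE_imp, lowE_L] using Prov.r1 (r - ε') ih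
  | r2 s h ih =>
      rw [lowE_L]
      apply Prov.r2
      intro q hq
      have hlt : q + ε' < s := lt_tsub_iff_right.mp hq
      have := ih (q + ε') hlt
      rwa [lowE_L, add_tsub_cancel_right] at this
  | r3 s h ih =>
      rw [lowE_bot]
      apply Prov.r3 (s - ε')
      intro q hq
      have hlt : s < q + ε' := by
        rcases le_or_gt ε' s with hse | hse
        · exact (tsub_lt_iff_right hse).mp hq
        · exact lt_of_lt_of_le hse (le_add_self)
      have := ih (q + ε') hlt
      rwa [lowE_L, add_tsub_cancel_right] at this

/-! ### Transfer lemma B: raising -/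

lemma prov_upE {ε ε' : NNRat} {φ : CML} (h : Prov ε φ) :
    Prov (ε + ε') (upE ε' φ) := by
  induction h with
  | taut h => exact Prov.taut (h.upE ε')
  | mp h1 h2 ih1 ih2 => exact Prov.mp ih1 ih2
  | a1 φ => exact Prov.a1 _
  | a2 r s φ =>
      simp only [upE_imp, upE_L]
      exact prov_L_mono _ (add_le_add_left (le_add_right le_rfl) ε') _
  | a3 r s φ ψ =>
      simp only [upE_imp, upE_and, upE_L, upE_neg]
      rcases le_or_gt ε (r + s) with hε | hε
      · have hidx : (r + ε') + (s + ε') - (ε + ε') = r + s - ε + ε' := by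
          rw [tsub_add_eq_add_tsub hε]
          rw [show (r + ε') + (s + ε') = (r + s + ε') + ε' by ring, add_comm ε ε',
            ← tsub_tsub, add_tsub_cancel_right]
        rw [← hidx]
        exact Prov.a3 (r + ε') (s + ε') (upE ε' φ) (upE ε' ψ)
      · rw [tsub_eq_zero_of_le hε.le, zero_add]
        exact prov_imp_of_prov _ (prov_L_of_le (le_add_left le_rfl) _)
  | a4 r s φ ψ =>
      simp only [upE_imp, upE_and, upE_L, upE_neg]
      refine prov_imp_trans (Prov.a4 (r + ε') (s + ε') (upE ε' φ) (upE ε' ψ)) ?_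
      apply prov_contrapose
      apply prov_L_mono
      calc (r + ε') + (s + ε') - (ε + ε') = (r + s) + (ε' + ε') - (ε + ε') := by ring_nf
        _ ≤ (r + s - ε) + (ε' + ε' - ε') := sub_add_sub_le _ _ _ _
        _ = r + s - ε + ε' := by rw [add_tsub_cancel_right]
  | r1 r h ih =>
      rw [upE_imp] at ih
      simpa only [upE_imp, upE_L] using Prov.r1 (r + ε') ih
  | r2 s h ih =>
      rw [upE_L]
      apply Prov.r2
      intro q hq
      rcases le_or_gt q ε' with hq' | hq'
      · exact prov_L_of_le (le_add_left hq') _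
      · have hε'q : ε' ≤ q := hq'.le
        have hlt : q - ε' < s := (tsub_lt_iff_right hε'q).mpr hq
        have := ih (q - ε') hlt
        rwa [upE_L, tsub_add_cancel_of_le hε'q] at this
  | r3 s h ih =>
      rw [upE_bot]
      apply Prov.r3 (s + ε')
      intro q hq
      have hε'q : ε' ≤ q := le_trans (le_add_self) (le_of_lt hq)
      have hlt : s < q - ε' := lt_tsub_iff_right.mpr hq
      have := ih (q - ε') hlt
      rwa [upE_L, tsub_add_cancel_of_le hε'q] at this

/-! ### Congruence: `upE ε' (lowE ε' ψ)` is provably equivalent to `ψ` at level `ε + ε'` -/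

lemma prov_upE_lowE_iff (ε ε' : NNRat) (ψ : CML) :
    Prov (ε + ε') ((upE ε' (lowE ε' ψ)).imp ψ) ∧
    Prov (ε + ε') (ψ.imp (upE ε' (lowE ε' ψ))) := by
  induction ψ with
  | top => exact ⟨prov_imp_refl _ _, prov_imp_refl _ _⟩
  | neg φ ih =>
      simp only [lowE_neg, upE_neg]
      exact ⟨prov_contrapose ih.2, prov_contrapose ih.1⟩
  | and φ ψ ih1 ih2 =>
      simp only [lowE_and, upE_and]
      exact ⟨prov_and_cong ih1.1 ih2.1, prov_and_cong ih1.2 ih2.2⟩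
  | L r φ ih =>
      simp only [lowE_L, upE_L]
      constructor
      · refine prov_imp_trans (Prov.r1 (r - ε' + ε') ih.1) ?_
        exact prov_L_mono _ le_tsub_add _
      · rcases le_or_gt ε' r with hr | hr
        · rw [tsub_add_cancel_of_le hr]
          exact Prov.r1 r ih.2
        · have h0 : r - ε' + ε' = ε' := by rw [tsub_eq_zero_of_le hr.le, zero_add]
          rw [h0]
          exact prov_imp_of_prov _ (prov_L_of_le le_add_self _)

/-! ### Positive formulae: `upE ε φ → φ` is provable at any level -/

lemma prov_upE_imp_of_pos {φ : CML} (h : CML.Pos φ) (δ ε : NNRat) :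
    Prov δ ((upE ε φ).imp φ) := by
  induction h with
  | top => exact prov_imp_refl _ _
  | and h1 h2 ih1 ih2 => exact prov_and_cong ih1 ih2
  | or h1 h2 ih1 ih2 =>
      rw [upE_or]
      exact prov_or_cong ih1 ih2
  | L r h ih =>
      rw [upE_L]
      exact prov_imp_trans (Prov.r1 (r + ε) ih) (prov_L_mono δ (le_add_right (le_refl r)) _)

end ProvTransferAux

/-- relations between the ε-provability relations via the encodings. -/
theorem prov_transfer (ε ε' : NNRat) (φ : CML) :
    (Prov (ε + ε') φ ↔ Prov ε (lowE ε' φ)) ∧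
    (Prov ε φ ↔ Prov 0 (lowE ε φ)) ∧
    (Prov ε φ ↔ Prov (ε + ε') (upE ε' φ)) ∧
    (Prov 0 φ ↔ Prov ε (upE ε φ)) ∧
    (CML.Pos φ → Prov ε' φ → Prov (ε + ε') φ) := by
  have key1 : ∀ (a b : NNRat) (ψ : CML), Prov (a + b) ψ ↔ Prov a (lowE b ψ) := by
    intro a b ψ
    constructor
    · exact prov_lowE
    · intro h
      have h2 : Prov (a + b) (upE b (lowE b ψ)) := prov_upE h
      exact Prov.mp (prov_upE_lowE_iff a b ψ).1 h2
  have key3 : ∀ (a b : NNRat) (ψ : CML), Prov a ψ ↔ Prov (a + b) (upE b ψ) := by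
    intro a b ψ
    constructor
    · exact prov_upE
    · intro h
      have h2 : Prov a (lowE b (upE b ψ)) := prov_lowE h
      rwa [lowE_upE] at h2
  refine ⟨key1 ε ε' φ, ?_, key3 ε ε' φ, ?_, ?_⟩
  · have := key1 0 ε φ; rwa [zero_add] at this
  · have := key3 0 ε φ; rwa [zero_add] at this
  · intro hp h
    have h2 : Prov (ε' + ε) (upE ε φ) := prov_upE h
    rw [add_comm] at h2
    exact Prov.mp (prov_upE_imp_of_pos hp (ε + ε') ε) h2
end

section
/- Logical characterization of bisimulation: for a continuous Markov kernel (M, Σ, θ) and states m, m' ∈ M, the following are equivalent: (1) m ∼ m'; (2) for every φ ∈ L, m ⊨_0 φ iff m' ⊨_0 φ; (3) for every φ ∈ L⁺, m ⊨_0 φ iff m' ⊨_0 φ. -/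
open MeasureTheory Set
open scoped ENNReal NNReal

namespace BisimAux

private def enc : CML → ℕ
  | .top => Nat.pair 0 0
  | .neg φ => Nat.pair 1 (enc φ)
  | .and φ ψ => Nat.pair 2 (Nat.pair (enc φ) (enc ψ))
  | .L r φ => Nat.pair 3 (Nat.pair (Encodable.encode (r : ℚ)) (enc φ))

private lemma enc_inj : ∀ φ ψ : CML, enc φ = enc ψ → φ = ψ := by
  intro φ
  induction φ with
  | top =>
    intro ψ h; cases ψ
    case top => rfl
    all_goals simp [enc, Nat.pair_eq_pair] at h
  | neg φ ih =>
    intro ψ h; cases ψ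
    case neg ψ' =>
      simp only [enc, Nat.pair_eq_pair] at h
      rw [ih _ h.2]
    all_goals simp [enc, Nat.pair_eq_pair] at h
  | and φ1 φ2 ih1 ih2 =>
    intro ψ h; cases ψ
    case and ψ1 ψ2 =>
      simp only [enc, Nat.pair_eq_pair] at h
      rw [ih1 _ h.2.1, ih2 _ h.2.2]
    all_goals simp [enc, Nat.pair_eq_pair] at h
  | L r φ ih =>
    intro ψ h; cases ψ
    case L r' ψ' =>
      simp only [enc, Nat.pair_eq_pair] at h
      have h1 : (r : ℚ) = (r' : ℚ) := Encodable.encode_injective h.2.1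
      have hr : r = r' := by exact_mod_cast h1
      rw [hr, ih _ h.2.2]
    all_goals simp [enc, Nat.pair_eq_pair] at h

instance : Countable CML := ⟨⟨enc, fun _ _ h => enc_inj _ _ h⟩⟩

lemma ennreal_eq_of_nnrat {a b : ℝ≥0∞} (ha : a ≠ ⊤) (hb : b ≠ ⊤)
    (h : ∀ q : NNRat, (((q : ℝ≥0) : ℝ≥0∞) ≤ a ↔ ((q : ℝ≥0) : ℝ≥0∞) ≤ b)) : a = b := by
  have key : ∀ x y : ℝ≥0∞, x < y →
      (∀ q : NNRat, (((q : ℝ≥0) : ℝ≥0∞) ≤ x ↔ ((q : ℝ≥0) : ℝ≥0∞) ≤ y)) → False := by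
    intro x y hlt hq
    rcases ENNReal.lt_iff_exists_rat_btwn.1 hlt with ⟨q, hq0, h1, h2⟩
    have hc : ((q.toNNRat : ℝ≥0) : ℝ≥0∞) = (((q : ℝ).toNNReal : ℝ≥0) : ℝ≥0∞) := by
      norm_cast
      ext
      rw [Real.coe_toNNReal']
      rw [show ((q.toNNRat : ℝ≥0) : ℝ) = ((q.toNNRat : ℚ) : ℝ) by norm_cast,
        Rat.coe_toNNRat q hq0, sup_of_le_left (by exact_mod_cast hq0)]
    have hxb : ((q.toNNRat : ℝ≥0) : ℝ≥0∞) ≤ y := by rw [hc]; exact h2.le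
    have := (hq q.toNNRat).2 hxb
    rw [hc] at this
    exact absurd h1 (not_lt.2 this)
  by_contra hne
  rcases Ne.lt_or_gt hne with hlt | hlt
  · exact key a b hlt h
  · exact key b a hlt (fun q => (h q).symm)

variable {M : Type*} [MeasurableSpace M] (θ : M → Measure M)

lemma measurableSet_sat (hθ : Measurable θ) (ε : NNRat) :
    ∀ φ : CML, MeasurableSet {x | sat θ ε x φ} := by
  intro φ
  induction φ with
  | top => simp [sat]
  | neg φ ih =>
    have : {x | sat θ ε x (CML.neg φ)} = {x | sat θ ε x φ}ᶜ := by ext x; simp [sat]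
    rw [this]; exact ih.compl
  | and φ ψ ihφ ihψ =>
    have : {x | sat θ ε x (CML.and φ ψ)} = {x | sat θ ε x φ} ∩ {x | sat θ ε x ψ} := by
      ext x; simp [sat]
    rw [this]; exact ihφ.inter ihψ
  | L r φ ih =>
    have h2 : Measurable (fun m => θ m {x | sat θ ε x φ} + ((ε : ℝ≥0) : ℝ≥0∞)) :=
      ((Measure.measurable_coe ih).comp hθ).add_const _
    have : {x | sat θ ε x (CML.L r φ)} =
        {m | ((r : ℝ≥0) : ℝ≥0∞) ≤ θ m {x | sat θ ε x φ} + ((ε : ℝ≥0) : ℝ≥0∞)} := rfl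
    rw [this]
    exact measurableSet_le measurable_const h2

/-- the generator: sets definable by positive formulae -/
def P : Set (Set M) := {s | ∃ ψ : CML, CML.Pos ψ ∧ s = {x | sat θ 0 x ψ}}

lemma isPiSystem_P : IsPiSystem (P θ) := by
  rintro s ⟨ψ1, h1, rfl⟩ t ⟨ψ2, h2, rfl⟩ -
  exact ⟨ψ1.and ψ2, h1.and h2, by ext x; simp [sat]⟩

lemma genP_le (hθ : Measurable θ) : MeasurableSpace.generateFrom (P θ) ≤ ‹MeasurableSpace M› :=
  MeasurableSpace.generateFrom_le (by rintro t ⟨ψ, hψ, rfl⟩; exact measurableSet_sat θ hθ 0 ψ)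

/-- measure of positive-definable sets agree for logically equivalent states -/
lemma measure_sat_eq (hfin : ∀ m : M, θ m univ ≠ ∞) {m n : M}
    (h : ∀ ψ : CML, CML.Pos ψ → (sat θ 0 m ψ ↔ sat θ 0 n ψ))
    (ψ : CML) (hψ : CML.Pos ψ) :
    θ m {x | sat θ 0 x ψ} = θ n {x | sat θ 0 x ψ} := by
  apply ennreal_eq_of_nnrat
    (ne_top_of_le_ne_top (hfin m) (measure_mono (subset_univ _)))
    (ne_top_of_le_ne_top (hfin n) (measure_mono (subset_univ _)))
  intro q
  have := h (CML.L q ψ) (CML.Pos.L q hψ)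
  simpa [sat] using this

lemma agree_on_genP (hθ : Measurable θ) (hfin : ∀ m : M, θ m univ ≠ ∞) {m n : M}
    (h : ∀ ψ : CML, CML.Pos ψ → (sat θ 0 m ψ ↔ sat θ 0 n ψ)) :
    ∀ s : Set M, MeasurableSet[MeasurableSpace.generateFrom (P θ)] s → θ m s = θ n s := by
  have huniv : θ m univ = θ n univ := by
    have := measure_sat_eq θ hfin h CML.top CML.Pos.top
    simpa [sat] using this
  intro s hs
  refine MeasurableSpace.induction_on_inter (m := MeasurableSpace.generateFrom (P θ))
    (C := fun s _ => θ m s = θ n s) rfl (isPiSystem_P θ) (by simp) ?_ ?_ ?_ s hs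
  · rintro t ⟨ψ, hψ, rfl⟩
    exact measure_sat_eq θ hfin h ψ hψ
  · intro t ht heq
    have htm : MeasurableSet t := genP_le θ hθ _ ht
    rw [measure_compl htm (ne_top_of_le_ne_top (hfin m) (measure_mono (subset_univ _))),
      measure_compl htm (ne_top_of_le_ne_top (hfin n) (measure_mono (subset_univ _))),
      heq, huniv]
  · intro f hdisj hmeas heq
    rw [measure_iUnion hdisj (fun i => genP_le θ hθ _ (hmeas i)),
      measure_iUnion hdisj (fun i => genP_le θ hθ _ (hmeas i))]
    exact tsum_congr heq

/-- the coding map into Cantor space -/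
noncomputable def gmap : M → (CML → Bool) :=
  fun m ψ => @decide (CML.Pos ψ ∧ sat θ 0 m ψ) (Classical.propDecidable _)

lemma gmap_measurable_gen :
    @Measurable M (CML → Bool) (MeasurableSpace.generateFrom (P θ)) _ (gmap θ) := by
  rw [@measurable_pi_iff M CML (fun _ => Bool) (MeasurableSpace.generateFrom (P θ)) _ (gmap θ)]
  intro ψ
  have hiff : ∀ x : M, gmap θ x ψ = true ↔ (CML.Pos ψ ∧ sat θ 0 x ψ) := by
    intro x; simp [gmap]
  have key : MeasurableSet[MeasurableSpace.generateFrom (P θ)]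
      {m : M | gmap θ m ψ = true} := by
    by_cases hp : CML.Pos ψ
    · have : {m : M | gmap θ m ψ = true} = {m | sat θ 0 m ψ} := by
        ext x; rw [mem_setOf_eq, hiff x]; simp [hp]
      rw [this]
      exact MeasurableSpace.measurableSet_generateFrom ⟨ψ, hp, rfl⟩
    · have : {m : M | gmap θ m ψ = true} = ∅ := by
        ext x; rw [mem_setOf_eq, hiff x]; simp [hp]
      rw [this]; exact @MeasurableSet.empty _ (MeasurableSpace.generateFrom (P θ))
  intro s _
  by_cases h1 : true ∈ s <;> by_cases h2 : false ∈ s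
  · have : (fun m => gmap θ m ψ) ⁻¹' s = univ := by
      ext x; cases hb : gmap θ x ψ <;> simp [mem_preimage, hb, h1, h2]
    rw [this]; exact MeasurableSet.univ
  · have : (fun m => gmap θ m ψ) ⁻¹' s = {m : M | gmap θ m ψ = true} := by
      ext x; cases hb : gmap θ x ψ <;> simp [mem_preimage, hb, h1, h2]
    rw [this]; exact key
  · have : (fun m => gmap θ m ψ) ⁻¹' s = {m : M | gmap θ m ψ = true}ᶜ := by
      ext x; cases hb : gmap θ x ψ <;> simp [mem_preimage, hb, h1, h2]
    rw [this]; exact key.compl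
  · have : (fun m => gmap θ m ψ) ⁻¹' s = ∅ := by
      ext x; cases hb : gmap θ x ψ <;> simp [mem_preimage, hb, h1, h2]
    rw [this]; exact @MeasurableSet.empty _ (MeasurableSpace.generateFrom (P θ))

/-- Blackwell-type lemma: R-closed measurable sets lie in the generated σ-algebra -/
lemma rclosed_mem_genP [TopologicalSpace M] [BorelSpace M]
    (hA : AnalyticSet (univ : Set M)) (hθ : Measurable θ)
    {C : Set M} (hC : MeasurableSet C)
    (hCl : RClosed (fun x y => ∀ ψ : CML, CML.Pos ψ → (sat θ 0 x ψ ↔ sat θ 0 y ψ)) C) :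
    MeasurableSet[MeasurableSpace.generateFrom (P θ)] C := by
  rw [AnalyticSet] at hA
  rcases hA with h0 | ⟨f, hfc, hrange⟩
  · have : C = ∅ := by
      rw [← subset_empty_iff, ← h0]; exact subset_univ C
    rw [this]; exact @MeasurableSet.empty _ (MeasurableSpace.generateFrom (P θ))
  · have hfsurj : Function.Surjective f := range_eq_univ.1 hrange
    have hg : Measurable (gmap θ) := (gmap_measurable_gen θ).mono (genP_le θ hθ) le_rfl
    have hgf : Measurable (gmap θ ∘ f) := hg.comp hfc.measurable
    have himg : ∀ s : Set M, MeasurableSet s → AnalyticSet (gmap θ '' s) := by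
      intro s hms
      have : gmap θ '' s = (gmap θ ∘ f) '' (f ⁻¹' s) := by
        rw [image_comp, image_preimage_eq s hfsurj]
      rw [this]
      exact (hfc.measurable hms).analyticSet_image hgf
    have hdis : Disjoint (gmap θ '' C) (gmap θ '' Cᶜ) := by
      rw [disjoint_left]
      rintro y ⟨a, ha, rfl⟩ ⟨b, hb, hgab⟩
      apply hb
      apply hCl
      refine ⟨a, ha, fun ψ hψ => ?_⟩
      have h2 := decide_eq_decide.mp (congrFun hgab ψ : gmap θ b ψ = gmap θ a ψ)
      exact ⟨fun hs => ((h2.symm).mp ⟨hψ, hs⟩).2, fun hs => ((h2.symm).mpr ⟨hψ, hs⟩).2⟩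
    obtain ⟨D, hsub, hdisj, hD⟩ :=
      (himg C hC).measurablySeparable (himg Cᶜ hC.compl) hdis
    have hCD : C = gmap θ ⁻¹' D := by
      apply Subset.antisymm
      · exact fun x hx => hsub (mem_image_of_mem _ hx)
      · intro x hx
        by_contra hxC
        exact (disjoint_left.1 hdisj) (mem_image_of_mem _ hxC) hx
    rw [hCD]
    exact gmap_measurable_gen θ hD

/-- direction (1) → (2) -/
lemma sat_iff_of_bisim (hθ : Measurable θ) :
    ∀ φ : CML, ∀ m n : M, Bisim θ m n → (sat θ 0 m φ ↔ sat θ 0 n φ) := by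
  intro φ
  induction φ with
  | top => intro m n _; simp [sat]
  | neg φ ih => intro m n h; simp only [sat]; rw [ih m n h]
  | and φ ψ ihφ ihψ => intro m n h; simp only [sat]; rw [ihφ m n h, ihψ m n h]
  | L r φ ih =>
    intro m n h
    obtain ⟨R, hR, hmn⟩ := h
    have hclosed : RClosed R {x | sat θ 0 x φ} := by
      rintro x ⟨c, hc, hcx⟩
      exact (ih c x ⟨R, hR, hcx⟩).1 hc
    have := hR m n hmn _ (measurableSet_sat θ hθ 0 φ) hclosed
    simp only [sat, this]

end BisimAux

/-- logical characterization of bisimulation: m ∼ m' iff m and m' satisfy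
the same formulae of L iff they satisfy the same formulae of L⁺ (classic semantics). -/
theorem bisim_logical_charact {M : Type*} [TopologicalSpace M] [MeasurableSpace M] [BorelSpace M]
    (hA : AnalyticSet (univ : Set M))
    (θ : M → Measure M) (hθ : Measurable θ) (hfin : ∀ m : M, θ m univ ≠ ∞)
    (m m' : M) :
    (Bisim θ m m' ↔ ∀ φ : CML, (sat θ 0 m φ ↔ sat θ 0 m' φ)) ∧
    (Bisim θ m m' ↔ ∀ φ : CML, CML.Pos φ → (sat θ 0 m φ ↔ sat θ 0 m' φ)) := by
  have h31 : (∀ φ : CML, CML.Pos φ → (sat θ 0 m φ ↔ sat θ 0 m' φ)) → Bisim θ m m' := by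
    intro h
    refine ⟨fun x y => ∀ ψ : CML, CML.Pos ψ → (sat θ 0 x ψ ↔ sat θ 0 y ψ), ?_, h⟩
    intro x y hxy C hC hCl
    exact BisimAux.agree_on_genP θ hθ hfin hxy C
      (BisimAux.rclosed_mem_genP θ hA hθ hC hCl)
  have h12 := BisimAux.sat_iff_of_bisim θ hθ
  exact ⟨⟨fun hb φ => h12 φ m m' hb, fun h => h31 (fun φ _ => h φ)⟩,
    ⟨fun hb φ _ => h12 φ m m' hb, h31⟩⟩
end

section
/- Parameterized characterization of bisimulation: for a continuous Markov kernel (M, Σ, θ), states m, m' ∈ M, and any rational ε ≥ 0, the following are equivalent: (1) m ∼ m'; (2) for every φ ∈ L, m ⊨_ε φ iff m' ⊨_ε φ; (3) for every φ ∈ L⁺, m ⊨_ε φ iff m' ⊨_ε φ. -/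
open MeasureTheory Set
open scoped ENNReal NNReal

section AuxProof

open MeasureTheory MeasurableSpace

/-! ### Countability of CML -/

private def cmlEnc : CML → ℕ
  | CML.top => 0
  | CML.neg φ => 4 * cmlEnc φ + 1
  | CML.and φ ψ => 4 * Nat.pair (cmlEnc φ) (cmlEnc ψ) + 2
  | CML.L r φ => 4 * Nat.pair (Encodable.encode (r : ℚ)) (cmlEnc φ) + 3

private theorem cmlEnc_inj : Function.Injective cmlEnc := by
  intro a
  induction a with
  | top => intro b h; cases b <;> simp only [cmlEnc] at h <;> first | rfl | omega
  | neg φ ih =>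
    intro b h
    cases b <;> simp only [cmlEnc] at h <;> try omega
    case neg ψ =>
      have h' : cmlEnc φ = cmlEnc ψ := by omega
      rw [ih h']
  | and φ ψ ihφ ihψ =>
    intro b h
    cases b <;> simp only [cmlEnc] at h <;> try omega
    case and φ' ψ' =>
      have hp : Nat.pair (cmlEnc φ) (cmlEnc ψ) = Nat.pair (cmlEnc φ') (cmlEnc ψ') := by omega
      obtain ⟨h1, h2⟩ := Nat.pair_eq_pair.mp hp
      rw [ihφ h1, ihψ h2]
  | L r φ ih =>
    intro b h
    cases b <;> simp only [cmlEnc] at h <;> try omega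
    case L r' φ' =>
      have hp : Nat.pair (Encodable.encode (r : ℚ)) (cmlEnc φ)
          = Nat.pair (Encodable.encode (r' : ℚ)) (cmlEnc φ') := by omega
      obtain ⟨h1, h2⟩ := Nat.pair_eq_pair.mp hp
      have hr : r = r' := by exact_mod_cast Encodable.encode_injective h1
      rw [hr, ih h2]

instance : Countable CML := ⟨⟨cmlEnc, cmlEnc_inj⟩⟩

/-! ### Measurability of satisfaction sets -/

theorem sat_measurableSet {M : Type*} [MeasurableSpace M] {θ : M → Measure M}
    (hθ : Measurable θ) (ε : NNRat) : ∀ φ : CML, MeasurableSet {x | sat θ ε x φ}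
  | CML.top => by simpa [sat] using MeasurableSet.univ
  | CML.neg φ => by
    have h := sat_measurableSet hθ ε φ
    have : {x | sat θ ε x (CML.neg φ)} = {x | sat θ ε x φ}ᶜ := by ext x; simp [sat]
    rw [this]; exact h.compl
  | CML.and φ ψ => by
    have h1 := sat_measurableSet hθ ε φ
    have h2 := sat_measurableSet hθ ε ψ
    have : {x | sat θ ε x (CML.and φ ψ)} = {x | sat θ ε x φ} ∩ {x | sat θ ε x ψ} := by
      ext x; simp [sat]
    rw [this]; exact h1.inter h2
  | CML.L r φ => by
    have h := sat_measurableSet hθ ε φ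
    have hmeas : Measurable fun x => θ x {n | sat θ ε n φ} :=
      (Measure.measurable_coe h).comp hθ
    have : {x | sat θ ε x (CML.L r φ)}
        = (fun x => θ x {n | sat θ ε n φ}) ⁻¹' {a | ((r : ℝ≥0) : ℝ≥0∞) ≤ a + ((ε : ℝ≥0) : ℝ≥0∞)} := by
      ext x; simp [sat]
    rw [this]
    exact hmeas ((measurable_id.add_const _) measurableSet_Ici)

/-! ### Bisim is a bisimulation, and implies logical equivalence -/
theorem isBisim_bisim {M : Type*} [MeasurableSpace M] (θ : M → Measure M) :
    IsBisim θ (Bisim θ) := by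
  rintro m n ⟨R, hR, hmn⟩ C hC hCl
  refine hR m n hmn C hC ?_
  rintro x ⟨c, hc, hcx⟩
  exact hCl ⟨c, hc, R, hR, hcx⟩

theorem bisim_sat {M : Type*} [MeasurableSpace M] {θ : M → Measure M}
    (hθ : Measurable θ) (ε : NNRat) :
    ∀ (φ : CML) (x y : M), Bisim θ x y → (sat θ ε x φ ↔ sat θ ε y φ)
  | CML.top, x, y, _ => Iff.rfl
  | CML.neg φ, x, y, h => by
    simp only [sat]
    exact (bisim_sat hθ ε φ x y h).not
  | CML.and φ ψ, x, y, h => by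
    simp only [sat]
    exact and_congr (bisim_sat hθ ε φ x y h) (bisim_sat hθ ε ψ x y h)
  | CML.L r φ, x, y, h => by
    simp only [sat]
    have key : θ x {n | sat θ ε n φ} = θ y {n | sat θ ε n φ} := by
      refine isBisim_bisim θ x y h _ (sat_measurableSet hθ ε φ) ?_
      rintro z ⟨c, hc, hcz⟩
      exact (bisim_sat hθ ε φ c z hcz).mp hc
    rw [key]

/-! ### Cancellation lemma for ε -/

theorem ennreal_eq_of_forall_nnrat_le_iff {a b : ℝ≥0∞} (ha : a ≠ ∞) (hb : b ≠ ∞)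
    (h : ∀ r : NNRat, (((r : ℝ≥0) : ℝ≥0∞) ≤ a ↔ ((r : ℝ≥0) : ℝ≥0∞) ≤ b)) : a = b := by
  lift a to ℝ≥0 using ha
  lift b to ℝ≥0 using hb
  have key : ∀ (u v : ℝ≥0), (∀ r : NNRat, ((r : ℝ≥0) ≤ u → (r : ℝ≥0) ≤ v)) → u ≤ v := by
    intro u v huv
    by_contra hlt
    push_neg at hlt
    obtain ⟨q, hq1, hq2⟩ := exists_rat_btwn (NNReal.coe_lt_coe.mpr hlt)
    have hq0 : 0 ≤ q := by exact_mod_cast le_of_lt (lt_of_le_of_lt v.coe_nonneg hq1)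
    have hcast := Rat.coe_toNNRat q hq0
    have hqc : ((q.toNNRat : ℝ≥0) : ℝ) = (q : ℝ) := by
      have h2 : ((q.toNNRat : ℝ≥0) : ℝ) = ((q.toNNRat : ℚ) : ℝ) := by norm_cast
      rw [h2, hcast]
    have h1 : (q.toNNRat : ℝ≥0) ≤ u := by
      rw [← NNReal.coe_le_coe, hqc]; exact le_of_lt hq2
    have h2 : (q.toNNRat : ℝ≥0) ≤ v := huv _ h1
    rw [← NNReal.coe_le_coe, hqc] at h2
    exact absurd (lt_of_lt_of_le hq1 h2) (lt_irrefl _)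
  have h1 : a ≤ b := key a b (fun r hr => by
    exact_mod_cast (h r).mp (by exact_mod_cast hr))
  have h2 : b ≤ a := key b a (fun r hr => by
    exact_mod_cast (h r).mpr (by exact_mod_cast hr))
  exact congrArg _ (le_antisymm h1 h2)

/-! ### Key lemma: R-closed Borel sets are in the generated σ-algebra -/

theorem aux_meas_gen {M : Type*} (S : ℕ → Set M) {u : Set (ℕ → ℕ)} (hu : MeasurableSet u) :
    MeasurableSet[MeasurableSpace.generateFrom (Set.range S)]
      ((fun (m : M) (i : ℕ) => (S i).indicator (fun _ => 1) m) ⁻¹' u) := by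
  letI : MeasurableSpace M := MeasurableSpace.generateFrom (Set.range S)
  have hq : Measurable (fun (m : M) (i : ℕ) => (S i).indicator (fun _ => 1) m) :=
    measurable_pi_lambda _ fun i =>
      measurable_const.indicator (MeasurableSpace.measurableSet_generateFrom ⟨i, rfl⟩)
  exact hq hu

theorem rclosed_mem_generateFrom {M : Type*} [TopologicalSpace M] [MeasurableSpace M]
    [BorelSpace M] (hA : AnalyticSet (univ : Set M)) (S : ℕ → Set M)
    (hS : ∀ i, MeasurableSet (S i)) (C : Set M) (hC : MeasurableSet C)
    (hCl : RClosed (fun a b => ∀ i, a ∈ S i ↔ b ∈ S i) C) :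
    MeasurableSet[MeasurableSpace.generateFrom (Set.range S)] C := by
  rcases isEmpty_or_nonempty M with hM | hM
  · have : C = ∅ := eq_empty_of_isEmpty C
    rw [this]; exact @MeasurableSet.empty _ (MeasurableSpace.generateFrom (Set.range S))
  rw [MeasureTheory.AnalyticSet] at hA
  rcases hA with hA | ⟨g, hgc, hgr⟩
  · exact absurd (univ_nonempty) (by rw [hA]; exact not_nonempty_empty)
  have hgs : Function.Surjective g := Set.range_eq_univ.mp hgr
  have hgm : Measurable g := hgc.measurable
  -- the coding map
  set q : M → ℕ → ℕ := fun m i => (S i).indicator (fun _ => 1) m with hq_def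
  have hq : Measurable q :=
    measurable_pi_lambda _ fun i => (measurable_const.indicator (hS i))
  have hqmem : ∀ (a : M) (i : ℕ), a ∈ S i ↔ q a i = 1 := by
    intro a i
    by_cases h : a ∈ S i <;> simp [hq_def, Set.indicator_apply, h]
  have hqR : ∀ a b : M, q a = q b → ∀ i, (a ∈ S i ↔ b ∈ S i) := by
    intro a b h i
    rw [hqmem a i, hqmem b i, congrFun h i]
  -- images are analytic
  have himg : ∀ D : Set M, MeasurableSet D → AnalyticSet (q '' D) := by
    intro D hD
    have : q '' D = (q ∘ g) '' (g ⁻¹' D) := by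
      rw [Set.image_comp, Set.image_preimage_eq D hgs]
    rw [this]
    exact (hgm hD).analyticSet_image (hq.comp hgm)
  have hdisj : Disjoint (q '' C) (q '' Cᶜ) := by
    rw [Set.disjoint_left]
    rintro y ⟨a, ha, rfl⟩ ⟨b, hb, hab⟩
    exact hb (hCl ⟨a, ha, hqR a b hab.symm⟩)
  obtain ⟨u, hu1, hu2, hu3⟩ :=
    (himg C hC).measurablySeparable (himg Cᶜ hC.compl) hdisj
  have hCeq : C = q ⁻¹' u := by
    apply Set.Subset.antisymm
    · intro x hx
      exact hu1 ⟨x, hx, rfl⟩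
    · intro x hx
      by_contra hxc
      exact Set.disjoint_left.mp hu2 ⟨x, hxc, rfl⟩ hx
  rw [hCeq]
  -- q is measurable w.r.t. the generated σ-algebra
  exact aux_meas_gen S hu3

/-! ### Dynkin argument -/

theorem measure_eq_on_generateFrom {M : Type*} [MeasurableSpace M] {μ ν : Measure M}
    (𝒜 : Set (Set M)) (hpi : IsPiSystem 𝒜) (h𝒜m : ∀ s ∈ 𝒜, MeasurableSet s)
    (huniv : univ ∈ 𝒜) (hμ : μ univ ≠ ∞)
    (h : ∀ s ∈ 𝒜, μ s = ν s)
    {C : Set M} (hC : MeasurableSet[MeasurableSpace.generateFrom 𝒜] C) : μ C = ν C := by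
  have hle : MeasurableSpace.generateFrom 𝒜 ≤ ‹MeasurableSpace M› :=
    MeasurableSpace.generateFrom_le h𝒜m
  have hν : ν univ ≠ ∞ := by rw [← h univ huniv]; exact hμ
  refine @MeasurableSpace.induction_on_inter M (MeasurableSpace.generateFrom 𝒜)
    (fun t _ => μ t = ν t) 𝒜 rfl hpi (by simp) h ?_ ?_ C hC
  · intro t ht hteq
    have htm : MeasurableSet t := hle _ ht
    rw [measure_compl htm (ne_top_of_le_ne_top hμ (measure_mono (subset_univ t))),
      measure_compl htm (ne_top_of_le_ne_top hν (measure_mono (subset_univ t))),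
      hteq, h univ huniv]
  · intro f hdisj hfm hfeq
    rw [measure_iUnion hdisj (fun i => hle _ (hfm i)),
      measure_iUnion hdisj (fun i => hle _ (hfm i))]
    exact tsum_congr hfeq
/-! ### Positive logical equivalence is a bisimulation -/

theorem isBisim_posEquiv {M : Type*} [TopologicalSpace M] [MeasurableSpace M] [BorelSpace M]
    (hA : AnalyticSet (univ : Set M)) (θ : M → Measure M) (hθ : Measurable θ)
    (hfin : ∀ m : M, θ m univ ≠ ∞) (ε : NNRat) :
    IsBisim θ (fun x y => ∀ φ : CML, CML.Pos φ → (sat θ ε x φ ↔ sat θ ε y φ)) := by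
  classical
  haveI : Nonempty CML := ⟨CML.top⟩
  obtain ⟨f, hf⟩ := exists_surjective_nat CML
  set S : ℕ → Set M := fun n => if CML.Pos (f n) then {x | sat θ ε x (f n)} else univ with hS_def
  have hS : ∀ i, MeasurableSet (S i) := by
    intro i
    by_cases h : CML.Pos (f i) <;> simp only [hS_def, h, if_true, if_false]
    · exact sat_measurableSet hθ ε (f i)
    · exact MeasurableSet.univ
  -- relation given by S agrees with positive logical equivalence
  have hRchar : ∀ a b : M, (∀ φ : CML, CML.Pos φ → (sat θ ε a φ ↔ sat θ ε b φ)) ↔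
      (∀ i, a ∈ S i ↔ b ∈ S i) := by
    intro a b
    constructor
    · intro h i
      by_cases hp : CML.Pos (f i) <;> simp only [hS_def, hp, if_true, if_false]
      · exact h (f i) hp
      · rfl
    · intro h φ hφ
      obtain ⟨i, rfl⟩ := hf φ
      have := h i
      simpa only [hS_def, hφ, if_true, Set.mem_setOf_eq] using this
  -- π-system facts
  have hunivmem : univ ∈ Set.range S := by
    obtain ⟨i, hi⟩ := hf CML.top
    refine ⟨i, ?_⟩
    simp only [hS_def, hi]
    rw [if_pos CML.Pos.top]
    ext x; simp [sat]
  have hpi : IsPiSystem (Set.range S) := by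
    rintro s ⟨i, rfl⟩ t ⟨j, rfl⟩ -
    by_cases hi : CML.Pos (f i)
    · by_cases hj : CML.Pos (f j)
      · obtain ⟨k, hk⟩ := hf ((f i).and (f j))
        refine ⟨k, ?_⟩
        simp only [hS_def, hk, hi, hj, if_true]
        rw [if_pos (CML.Pos.and hi hj)]
        ext x; simp [sat]
      · refine ⟨i, ?_⟩
        simp only [hS_def, hi, hj, if_true, if_false, Set.inter_univ]
    · refine ⟨j, ?_⟩
      simp only [hS_def, hi, if_false, Set.univ_inter]
  -- measures agree on elements of the range
  intro x y hxy C hC hCl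
  have hposeq : ∀ φ : CML, CML.Pos φ →
      θ x {n | sat θ ε n φ} = θ y {n | sat θ ε n φ} := by
    intro φ hφ
    have hfinx : θ x {n | sat θ ε n φ} ≠ ∞ :=
      ne_top_of_le_ne_top (hfin x) (measure_mono (subset_univ _))
    have hfiny : θ y {n | sat θ ε n φ} ≠ ∞ :=
      ne_top_of_le_ne_top (hfin y) (measure_mono (subset_univ _))
    have heq : θ x {n | sat θ ε n φ} + ((ε : ℝ≥0) : ℝ≥0∞)
        = θ y {n | sat θ ε n φ} + ((ε : ℝ≥0) : ℝ≥0∞) := by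
      refine ennreal_eq_of_forall_nnrat_le_iff ?_ ?_ ?_
      · exact ENNReal.add_ne_top.mpr ⟨hfinx, ENNReal.coe_ne_top⟩
      · exact ENNReal.add_ne_top.mpr ⟨hfiny, ENNReal.coe_ne_top⟩
      · intro r
        have := hxy (CML.L r φ) (CML.Pos.L r hφ)
        simpa only [sat] using this
    exact (ENNReal.add_right_inj (ENNReal.coe_ne_top (r := (ε : ℝ≥0)))).mp
      (by rw [add_comm ((ε : ℝ≥0) : ℝ≥0∞) (θ x {n | sat θ ε n φ}),
        add_comm ((ε : ℝ≥0) : ℝ≥0∞) (θ y {n | sat θ ε n φ})]; exact heq)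
  have huniveq : θ x univ = θ y univ := by
    have h1 := hposeq CML.top CML.Pos.top
    have h2 : {n : M | sat θ ε n CML.top} = univ := by ext n; simp [sat]
    rwa [h2] at h1
  have hmeaseq : ∀ s ∈ Set.range S, θ x s = θ y s := by
    rintro s ⟨i, rfl⟩
    by_cases hi : CML.Pos (f i)
    · simp only [hS_def, hi, if_true]
      exact hposeq (f i) hi
    · simp only [hS_def, hi, if_false]
      exact huniveq
  -- conclude
  have hClS : RClosed (fun a b => ∀ i, a ∈ S i ↔ b ∈ S i) C := by
    rintro z ⟨c, hc, hcz⟩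
    exact hCl ⟨c, hc, (hRchar c z).mpr hcz⟩
  have hgen := rclosed_mem_generateFrom hA S hS C hC hClS
  exact measure_eq_on_generateFrom (Set.range S) hpi
    (by rintro s ⟨i, rfl⟩; exact hS i) hunivmem (hfin x) hmeaseq hgen

end AuxProof

/-- parameterized characterization of bisimulation: for any ε ≥ 0,
m ∼ m' iff m and m' ε-satisfy the same formulae of L iff the same formulae of L⁺. -/
theorem bisim_param_charact {M : Type*} [TopologicalSpace M] [MeasurableSpace M] [BorelSpace M]
    (hA : AnalyticSet (univ : Set M))
    (θ : M → Measure M) (hθ : Measurable θ) (hfin : ∀ m : M, θ m univ ≠ ∞)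
    (m m' : M) (ε : NNRat) :
    (Bisim θ m m' ↔ ∀ φ : CML, (sat θ ε m φ ↔ sat θ ε m' φ)) ∧
    (Bisim θ m m' ↔ ∀ φ : CML, CML.Pos φ → (sat θ ε m φ ↔ sat θ ε m' φ)) := by
  have hback : (∀ φ : CML, CML.Pos φ → (sat θ ε m φ ↔ sat θ ε m' φ)) → Bisim θ m m' := by
    intro h
    exact ⟨_, isBisim_posEquiv hA θ hθ hfin ε, h⟩
  constructor
  · exact ⟨fun hb φ => bisim_sat hθ ε φ m m' hb, fun h => hback (fun φ _ => h φ)⟩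
  · exact ⟨fun hb φ _ => bisim_sat hθ ε φ m m' hb, hback⟩
end
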